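/- Let Y be a ℂ-uniformly convex complex Banach space with modulus of ℂ-convexity δ_ℂ. Fix ε > 0. If T : c₀(X) → Y has ‖T‖ ≤ 1 and A ⊂ ℕ satisfies ‖T P_A‖ ≥ 1 − δ_ℂ(ε)/(1 + δ_ℂ(ε)), then ‖T (I − P_A)‖ ≤ ε, where P_A is the canonical band projection onto the coordinates in A. -/

import Mathlib

open scoped ZeroAtInfty

/-- The modulus of ℂ-convexity of a complex normed space `Y`. -/
noncomputable def cplxConvexityModulus (Y : Type*) [NormedAddCommGroup Y] [NormedSpace ℂ Y]
    (ε : ℝ) : ℝ :=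
  sInf { d : ℝ | ∃ x y : Y, ‖x‖ = 1 ∧ ‖y‖ = 1 ∧
    d = sSup { r : ℝ | ∃ lam : ℂ, ‖lam‖ = 1 ∧ r = ‖x + (lam * (ε : ℂ)) • y‖ - 1 } }

section Aux

variable {X : Type*} [NormedAddCommGroup X]

lemma c0_norm_apply_le (f : C₀(ℕ, X)) (i : ℕ) : ‖f i‖ ≤ ‖f‖ :=
  f.toBCF.norm_coe_le_norm i

lemma c0_norm_le (f : C₀(ℕ, X)) {C : ℝ} (hC : 0 ≤ C) (h : ∀ i, ‖f i‖ ≤ C) : ‖f‖ ≤ C := by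
  rw [← ZeroAtInftyContinuousMap.norm_toBCF_eq_norm]
  exact (BoundedContinuousFunction.norm_le hC).mpr h

end Aux

set_option maxHeartbeats 1000000

/-- Lemma 2.2 (first part), [A, Lemma 2.3] for `c₀(X)`.
`P` is the canonical band projection onto the coordinates in `A`. -/
theorem projection_estimate_c0
    (X Y : Type*) [NormedAddCommGroup X] [NormedSpace ℂ X] [CompleteSpace X]
    [NormedAddCommGroup Y] [NormedSpace ℂ Y] [CompleteSpace Y]
    (hY : ∀ ε : ℝ, 0 < ε → 0 < cplxConvexityModulus Y ε)
    (ε : ℝ) (hε : 0 < ε)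
    (T : C₀(ℕ, X) →L[ℂ] Y) (hT : ‖T‖ ≤ 1)
    (A : Set ℕ)
    (P : C₀(ℕ, X) →L[ℂ] C₀(ℕ, X))
    (hP : ∀ (x : C₀(ℕ, X)) (i : ℕ), P x i = A.indicator (fun j => x j) i)
    (hTP : ‖T.comp P‖ ≥ 1 - cplxConvexityModulus Y ε / (1 + cplxConvexityModulus Y ε)) :
    ‖T - T.comp P‖ ≤ ε := by
  classical
  set δ := cplxConvexityModulus Y ε with hδdef
  have hδ : 0 < δ := hY ε hε
  by_contra hcon
  push_neg at hcon
  -- get a vector where `T - T ∘ P` is big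
  obtain ⟨v, hv1, hvb⟩ := (T - T.comp P).exists_lt_apply_of_lt_opNorm hcon
  set w : C₀(ℕ, X) := v - P v with hw
  have hTw : (T - T.comp P) v = T w := by
    simp [hw, map_sub]
  rw [hTw] at hvb
  set b : ℝ := ‖T w‖ with hbdef
  have hb0 : 0 < b := lt_trans hε hvb
  -- coordinates of w
  have hwcoord : ∀ i : ℕ, w i = if i ∈ A then 0 else v i := by
    intro i
    have : w i = v i - P v i := by
      rw [hw]; rw [ZeroAtInftyContinuousMap.coe_sub]; rfl
    rw [this, hP v i, Set.indicator_apply]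
    split <;> simp
  have hv1' : ‖v‖ ≤ 1 := le_of_lt hv1
  have hwle : ‖w‖ ≤ 1 := by
    refine c0_norm_le w zero_le_one fun i => ?_
    rw [hwcoord i]
    split
    · simp
    · exact le_trans (c0_norm_apply_le v i) hv1'
  have hb1 : b ≤ 1 := by
    calc b ≤ ‖T‖ * ‖w‖ := T.le_opNorm w
      _ ≤ 1 * 1 := mul_le_mul hT hwle (norm_nonneg _) zero_le_one
      _ = 1 := one_mul 1
  -- ‖P u‖ ≤ ‖u‖
  have hPnorm : ∀ u : C₀(ℕ, X), ‖P u‖ ≤ ‖u‖ := by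
    intro u
    refine c0_norm_le (P u) (norm_nonneg u) fun i => ?_
    rw [hP u i, Set.indicator_apply]
    split
    · exact c0_norm_apply_le u i
    · simp
  -- the key combination estimate
  have hcomb : ∀ (u : C₀(ℕ, X)), ‖u‖ ≤ 1 → ∀ lam : ℂ, ‖lam‖ = 1 →
      ‖P u + lam • w‖ ≤ 1 := by
    intro u hu lam hlam
    refine c0_norm_le _ zero_le_one fun i => ?_
    have : (P u + lam • w) i = P u i + lam • w i := by
      rw [ZeroAtInftyContinuousMap.coe_add, ZeroAtInftyContinuousMap.coe_smul]; rfl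
    rw [this, hP u i, Set.indicator_apply, hwcoord i]
    split
    · simp only [smul_zero, add_zero]
      exact le_trans (c0_norm_apply_le u i) hu
    · simp only [zero_add, norm_smul, hlam, one_mul]
      exact le_trans (c0_norm_apply_le v i) hv1'
  -- boundedness facts about the defining sets
  have hBddBelow : ∀ d ∈ { d : ℝ | ∃ x y : Y, ‖x‖ = 1 ∧ ‖y‖ = 1 ∧
      d = sSup { r : ℝ | ∃ lam : ℂ, ‖lam‖ = 1 ∧ r = ‖x + (lam * (ε : ℂ)) • y‖ - 1 } },
      (-1 : ℝ) ≤ d := by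
    rintro d ⟨x, y, hx, hy, rfl⟩
    have hub : BddAbove { r : ℝ | ∃ lam : ℂ, ‖lam‖ = 1 ∧ r = ‖x + (lam * (ε : ℂ)) • y‖ - 1 } := by
      refine ⟨ε, ?_⟩
      rintro r ⟨lam, hlam, rfl⟩
      have : ‖x + (lam * (ε : ℂ)) • y‖ ≤ 1 + ε := by
        calc ‖x + (lam * (ε : ℂ)) • y‖ ≤ ‖x‖ + ‖(lam * (ε : ℂ)) • y‖ := norm_add_le _ _
          _ = 1 + ε := by
            simp [hx, hy, norm_smul, norm_mul, hlam, Complex.norm_real, Real.norm_eq_abs, abs_of_pos hε]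
      linarith
    have hmem : (‖x + ((1 : ℂ) * (ε : ℂ)) • y‖ - 1) ∈
        { r : ℝ | ∃ lam : ℂ, ‖lam‖ = 1 ∧ r = ‖x + (lam * (ε : ℂ)) • y‖ - 1 } :=
      ⟨1, by simp, rfl⟩
    have := le_csSup hub hmem
    have hge : (-1 : ℝ) ≤ ‖x + ((1 : ℂ) * (ε : ℂ)) • y‖ - 1 := by
      have := norm_nonneg (x + ((1 : ℂ) * (ε : ℂ)) • y)
      linarith
    linarith
  -- δ ≤ ε (using the unit vector (T w)/b)
  have hδε : δ ≤ ε := by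
    set y0 : Y := ((b : ℂ))⁻¹ • T w with hy0
    have hy0n : ‖y0‖ = 1 := by
      rw [hy0, norm_smul, norm_inv, Complex.norm_real, Real.norm_eq_abs, abs_of_pos hb0, ← hbdef,
        inv_mul_cancel₀ (ne_of_gt hb0)]
    have hmem : (sSup { r : ℝ | ∃ lam : ℂ, ‖lam‖ = 1 ∧
        r = ‖y0 + (lam * (ε : ℂ)) • y0‖ - 1 }) ∈
        { d : ℝ | ∃ x y : Y, ‖x‖ = 1 ∧ ‖y‖ = 1 ∧
          d = sSup { r : ℝ | ∃ lam : ℂ, ‖lam‖ = 1 ∧ r = ‖x + (lam * (ε : ℂ)) • y‖ - 1 } } :=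
      ⟨y0, y0, hy0n, hy0n, rfl⟩
    have h1 : δ ≤ sSup { r : ℝ | ∃ lam : ℂ, ‖lam‖ = 1 ∧
        r = ‖y0 + (lam * (ε : ℂ)) • y0‖ - 1 } := csInf_le ⟨-1, hBddBelow⟩ hmem
    have h2 : sSup { r : ℝ | ∃ lam : ℂ, ‖lam‖ = 1 ∧
        r = ‖y0 + (lam * (ε : ℂ)) • y0‖ - 1 } ≤ ε := by
      refine Real.sSup_le ?_ (le_of_lt hε)
      rintro r ⟨lam, hlam, rfl⟩
      have : ‖y0 + (lam * (ε : ℂ)) • y0‖ ≤ 1 + ε := by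
        calc ‖y0 + (lam * (ε : ℂ)) • y0‖ ≤ ‖y0‖ + ‖(lam * (ε : ℂ)) • y0‖ := norm_add_le _ _
          _ = 1 + ε := by
            simp [hy0n, norm_smul, norm_mul, hlam, Complex.norm_real, Real.norm_eq_abs, abs_of_pos hε]
      linarith
    linarith
  -- main estimate: for every unit-ball u, ‖T (P u)‖ ≤ 1 - δ * b / ε
  have key : ∀ u : C₀(ℕ, X), ‖u‖ ≤ 1 → ‖T (P u)‖ ≤ 1 - δ * b / ε := by
    intro u hu
    set a : ℝ := ‖T (P u)‖ with hadef
    have ha1 : a ≤ 1 := by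
      calc a ≤ ‖T‖ * ‖P u‖ := T.le_opNorm (P u)
        _ ≤ 1 * 1 := mul_le_mul hT (le_trans (hPnorm u) hu) (norm_nonneg _) zero_le_one
        _ = 1 := one_mul 1
    rcases eq_or_lt_of_le (norm_nonneg (T (P u))) with ha0 | ha0
    · -- a = 0
      rw [← hadef] at ha0
      rw [← ha0]
      have hδb : δ * b ≤ ε := by
        calc δ * b ≤ ε * 1 := mul_le_mul hδε hb1 (le_of_lt hb0) (le_of_lt hε)
          _ = ε := mul_one ε
      have := (div_le_one hε).mpr hδb
      linarith
    · -- a > 0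
      rw [← hadef] at ha0
      set x : Y := ((a : ℂ))⁻¹ • T (P u) with hx
      set y : Y := ((b : ℂ))⁻¹ • T w with hy
      have hxn : ‖x‖ = 1 := by
        rw [hx, norm_smul, norm_inv, Complex.norm_real, Real.norm_eq_abs, abs_of_pos ha0, ← hadef,
          inv_mul_cancel₀ (ne_of_gt ha0)]
      have hyn : ‖y‖ = 1 := by
        rw [hy, norm_smul, norm_inv, Complex.norm_real, Real.norm_eq_abs, abs_of_pos hb0, ← hbdef,
          inv_mul_cancel₀ (ne_of_gt hb0)]
      have ha0' : ((a : ℂ)) ≠ 0 := by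
        exact_mod_cast Complex.ofReal_ne_zero.mpr (ne_of_gt ha0)
      have hb0' : ((b : ℂ)) ≠ 0 := by
        exact_mod_cast Complex.ofReal_ne_zero.mpr (ne_of_gt hb0)
      -- each element of the inner set is ≤ ε / b * (1 - a)
      have hbound : ∀ lam : ℂ, ‖lam‖ = 1 →
          ‖x + (lam * (ε : ℂ)) • y‖ ≤ 1 + ε / b * (1 - a) := by
        intro lam hlam
        -- inner point estimate along the big circle
        have hbig : ‖x + (lam * ((b / a : ℝ) : ℂ)) • y‖ ≤ a⁻¹ := by
          have hrw : x + (lam * ((b / a : ℝ) : ℂ)) • y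
              = ((a : ℂ))⁻¹ • T (P u + lam • w) := by
            rw [map_add, map_smul, hx, hy]
            match_scalars
            · push_cast
              ring
            · push_cast
              field_simp
          rw [hrw, norm_smul, norm_inv, Complex.norm_real, Real.norm_eq_abs, abs_of_pos ha0]
          have hT1 : ‖T (P u + lam • w)‖ ≤ 1 := by
            calc ‖T (P u + lam • w)‖ ≤ ‖T‖ * ‖P u + lam • w‖ := T.le_opNorm _
              _ ≤ 1 * 1 := mul_le_mul hT (hcomb u hu lam hlam) (norm_nonneg _) zero_le_one
              _ = 1 := one_mul 1
          calc a⁻¹ * ‖T (P u + lam • w)‖ ≤ a⁻¹ * 1 :=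
                mul_le_mul_of_nonneg_left hT1 (inv_nonneg.mpr (le_of_lt ha0))
            _ = a⁻¹ := mul_one _
        -- convex combination identity
        have hid : x + (lam * (ε : ℂ)) • y
            = (((1 - ε * a / b : ℝ)) : ℂ) • x
              + (((ε * a / b : ℝ)) : ℂ) • (x + (lam * ((b / a : ℝ) : ℂ)) • y) := by
          rw [hx, hy]
          match_scalars
          · push_cast
            field_simp
            ring
          · push_cast
            field_simp
        rw [hid]
        have h1 : 0 ≤ 1 - ε * a / b := by
          have hεa : ε * a ≤ b := by
            calc ε * a ≤ ε * 1 := mul_le_mul_of_nonneg_left ha1 (le_of_lt hε)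
              _ = ε := mul_one ε
              _ ≤ b := le_of_lt hvb
          rw [sub_nonneg, div_le_one hb0]
          exact hεa
        have h2 : (0 : ℝ) ≤ ε * a / b := by positivity
        calc ‖(((1 - ε * a / b : ℝ)) : ℂ) • x
              + (((ε * a / b : ℝ)) : ℂ) • (x + (lam * ((b / a : ℝ) : ℂ)) • y)‖
            ≤ ‖(((1 - ε * a / b : ℝ)) : ℂ) • x‖
              + ‖(((ε * a / b : ℝ)) : ℂ) • (x + (lam * ((b / a : ℝ) : ℂ)) • y)‖ :=
              norm_add_le _ _
          _ = (1 - ε * a / b) * ‖x‖ + (ε * a / b) * ‖x + (lam * ((b / a : ℝ) : ℂ)) • y‖ := by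
              have e1 : ‖(((1 - ε * a / b : ℝ)) : ℂ) • x‖ = (1 - ε * a / b) * ‖x‖ := by
                rw [norm_smul (((1 - ε * a / b : ℝ)) : ℂ) x, Complex.norm_real,
                  Real.norm_eq_abs, abs_of_nonneg h1]
              have e2 : ‖(((ε * a / b : ℝ)) : ℂ) • (x + (lam * ((b / a : ℝ) : ℂ)) • y)‖
                  = (ε * a / b) * ‖x + (lam * ((b / a : ℝ) : ℂ)) • y‖ := by
                rw [norm_smul (((ε * a / b : ℝ)) : ℂ) (x + (lam * ((b / a : ℝ) : ℂ)) • y),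
                  Complex.norm_real, Real.norm_eq_abs, abs_of_nonneg h2]
              rw [e1, e2]
          _ ≤ (1 - ε * a / b) * 1 + (ε * a / b) * a⁻¹ := by
              rw [hxn]
              exact add_le_add (le_refl _) (mul_le_mul_of_nonneg_left hbig h2)
          _ = 1 + ε / b * (1 - a) := by
              field_simp
              ring
      -- conclude δ ≤ ε / b * (1 - a)
      have hmem : (sSup { r : ℝ | ∃ lam : ℂ, ‖lam‖ = 1 ∧
          r = ‖x + (lam * (ε : ℂ)) • y‖ - 1 }) ∈
          { d : ℝ | ∃ x y : Y, ‖x‖ = 1 ∧ ‖y‖ = 1 ∧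
            d = sSup { r : ℝ | ∃ lam : ℂ, ‖lam‖ = 1 ∧ r = ‖x + (lam * (ε : ℂ)) • y‖ - 1 } } :=
        ⟨x, y, hxn, hyn, rfl⟩
      have h1 : δ ≤ sSup { r : ℝ | ∃ lam : ℂ, ‖lam‖ = 1 ∧
          r = ‖x + (lam * (ε : ℂ)) • y‖ - 1 } := csInf_le ⟨-1, hBddBelow⟩ hmem
      have h2 : sSup { r : ℝ | ∃ lam : ℂ, ‖lam‖ = 1 ∧
          r = ‖x + (lam * (ε : ℂ)) • y‖ - 1 } ≤ ε / b * (1 - a) := by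
        have hnn : (0:ℝ) ≤ ε / b * (1 - a) :=
          mul_nonneg (by positivity) (by linarith)
        refine Real.sSup_le ?_ hnn
        rintro r ⟨lam, hlam, rfl⟩
        have := hbound lam hlam
        linarith
      have hδle : δ ≤ ε / b * (1 - a) := le_trans h1 h2
      -- rearrange: a ≤ 1 - δ * b / ε
      have hεb : 0 < ε / b := by positivity
      have : δ * b / ε ≤ 1 - a := by
        rw [div_le_iff₀ hε]
        have := mul_le_mul_of_nonneg_left hδle (le_of_lt hb0)
        calc δ * b = b * δ := mul_comm δ b
          _ ≤ b * (ε / b * (1 - a)) := this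
          _ = ε * (1 - a) := by field_simp
          _ = (1 - a) * ε := mul_comm _ _
      linarith
  -- deduce operator norm bound for T ∘ P
  have hcnonneg : 0 ≤ 1 - δ * b / ε := by
    have : δ * b ≤ ε := by
      calc δ * b ≤ ε * 1 := mul_le_mul hδε hb1 (le_of_lt hb0) (le_of_lt hε)
        _ = ε := mul_one ε
    have := (div_le_one hε).mpr this
    linarith
  have hTPle : ‖T.comp P‖ ≤ 1 - δ * b / ε := by
    refine ContinuousLinearMap.opNorm_le_bound _ hcnonneg fun u => ?_
    rcases eq_or_ne u 0 with rfl | hu0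
    · simp
    · have hun : ‖u‖ ≠ 0 := norm_ne_zero_iff.mpr hu0
      have hupos : 0 < ‖u‖ := norm_pos_iff.mpr hu0
      set u' : C₀(ℕ, X) := ((‖u‖ : ℂ))⁻¹ • u with hu'
      have hu'n : ‖u'‖ = 1 := by
        rw [hu', norm_smul, norm_inv, Complex.norm_real, Real.norm_eq_abs, abs_of_pos hupos,
          inv_mul_cancel₀ hun]
      have := key u' (le_of_eq hu'n)
      have hrw : T (P u') = ((‖u‖ : ℂ))⁻¹ • T (P u) := by
        rw [hu', map_smul, map_smul]
      rw [hrw, norm_smul, norm_inv, Complex.norm_real, Real.norm_eq_abs, abs_of_pos hupos] at this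
      have h3 : ‖(T.comp P) u‖ = ‖T (P u)‖ := rfl
      rw [h3]
      calc ‖T (P u)‖ = ‖u‖ * (‖u‖⁻¹ * ‖T (P u)‖) := by field_simp
        _ ≤ ‖u‖ * (1 - δ * b / ε) := mul_le_mul_of_nonneg_left this (le_of_lt hupos)
        _ = (1 - δ * b / ε) * ‖u‖ := mul_comm _ _
  -- final contradiction
  have hstrict : 1 - δ * b / ε < 1 - δ / (1 + δ) := by
    have h1δ : 0 < 1 + δ := by linarith
    have : δ / (1 + δ) < δ * b / ε := by
      rw [div_lt_div_iff₀ h1δ hε]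
      have hεb : ε < b * (1 + δ) := by nlinarith
      nlinarith
    linarith
  have h4 : (1 : ℝ) - δ / (1 + δ) ≤ ‖T.comp P‖ := hTP
  linarith
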